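/- Let K be a field, m ≥ 1, let x_0, x_1, …, x_m and u_0, u_1, …, u_m be nonzero elements of K with ∏_{s=0}^{m} x_s = ∏_{s=0}^{m} u_s, and let z ∈ K satisfy z ≠ 0 and 1 − x_j·z ≠ 0 for 1 ≤ j ≤ m. For 1 ≤ i ≤ m set G_i := ∏_{j=1}^{i} (x_j/u_{j−1})·(1 − u_{j−1}·z)/(1 − x_j·z). Then Σ_{i=1}^{m} ( ∏_{j=i+1}^{m} x_j/u_j )·(1 − x_i/u_i)·(1 − G_i) = (x_0·z)^{-1}·( ∏_{s=0}^{m}(1 − u_s·z) / ∏_{s=1}^{m}(1 − x_s·z) − (1 − x_0·z) ). -/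

import Mathlib

private lemma shift_prod {K : Type*} [CommMonoid K] (g : ℕ → K) (i : ℕ) :
    ∏ j ∈ Finset.Icc 1 i, g (j - 1) = ∏ j ∈ Finset.range i, g j := by
  rw [← Finset.Ico_add_one_right_eq_Icc, Finset.prod_Ico_eq_prod_range]
  simp

private lemma split_bot {K : Type*} [CommMonoid K] (f : ℕ → K) {i m : ℕ}
    (h2 : i ≤ m) :
    ∏ j ∈ Finset.Icc i m, f j = f i * ∏ j ∈ Finset.Icc (i + 1) m, f j := by
  rw [← Finset.Ico_add_one_right_eq_Icc, ← Finset.Ico_add_one_right_eq_Icc,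
    Finset.prod_eq_prod_Ico_succ_bot (by omega) f]

private lemma split_zero {K : Type*} [CommMonoid K] (f : ℕ → K) (m : ℕ) :
    ∏ j ∈ Finset.range (m + 1), f j = f 0 * ∏ j ∈ Finset.Icc 1 m, f j := by
  rw [Finset.range_eq_Ico, Finset.prod_eq_prod_Ico_succ_bot (by omega) f,
    Finset.Ico_add_one_right_eq_Icc]

private lemma per_term_alg {K : Type*} [Field K] (a b p q ui xi x0 z : K)
    (hb : b ≠ 0) (hq : q ≠ 0) (hui : ui ≠ 0) (hx0 : x0 ≠ 0) (hz : z ≠ 0) :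
    a / b * (1 - xi / ui) - (1 - xi / ui) * (ui * p / (x0 * q)) =
      a / b + (x0 * z)⁻¹ * (p * (1 - ui * z) / q) -
        (xi / ui * (a / b) + (x0 * z)⁻¹ * (p * (1 - xi * z) / q)) := by
  field_simp
  ring



/-- The telescoping identity behind the Bergeron–Haiman algorithm computation
(formulas 4.27–4.30 of Bergeron–Garsia): with
`G_i = ∏_{j=1}^i (x_j/u_{j-1}) (1 - u_{j-1} z)/(1 - x_j z)`,
`∑_{i=1}^m (∏_{j=i+1}^m x_j/u_j)(1 - x_i/u_i)(1 - G_i)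
  = (x_0 z)⁻¹ ( ∏_{s=0}^m (1 - u_s z) / ∏_{s=1}^m (1 - x_s z) - (1 - x_0 z) )`.
Here `x, u : ℕ → K`, with only the values at `0, 1, …, m` relevant. -/
theorem statement19 {K : Type*} [Field K] (m : ℕ) (hm : 1 ≤ m)
    (x u : ℕ → K)
    (hx0 : ∀ s, s ≤ m → x s ≠ 0) (hu0 : ∀ s, s ≤ m → u s ≠ 0)
    (hprod : ∏ s ∈ Finset.range (m + 1), x s = ∏ s ∈ Finset.range (m + 1), u s)
    (z : K) (hz : z ≠ 0) (hxz : ∀ j, 1 ≤ j → j ≤ m → 1 - x j * z ≠ 0) :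
    ∑ i ∈ Finset.Icc 1 m,
        (∏ j ∈ Finset.Icc (i + 1) m, x j / u j) * (1 - x i / u i) *
          (1 - ∏ j ∈ Finset.Icc 1 i,
            (x j / u (j - 1)) * ((1 - u (j - 1) * z) / (1 - x j * z))) =
      (x 0 * z)⁻¹ *
        ((∏ s ∈ Finset.range (m + 1), (1 - u s * z)) /
            (∏ s ∈ Finset.Icc 1 m, (1 - x s * z)) -
          (1 - x 0 * z)) := by
  have hx00 : x 0 ≠ 0 := hx0 0 (by omega)
  set F : ℕ → K := fun i =>
    (∏ j ∈ Finset.Icc (i + 1) m, x j / u j) +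
      (x 0 * z)⁻¹ * ((∏ s ∈ Finset.range (i + 1), (1 - u s * z)) /
        (∏ s ∈ Finset.Icc 1 i, (1 - x s * z))) with hF
  have key : ∀ i ∈ Finset.Icc 1 m,
      (∏ j ∈ Finset.Icc (i + 1) m, x j / u j) * (1 - x i / u i) *
          (1 - ∏ j ∈ Finset.Icc 1 i,
            (x j / u (j - 1)) * ((1 - u (j - 1) * z) / (1 - x j * z))) =
        F i - F (i - 1) := by
    intro i hi
    rw [Finset.mem_Icc] at hi
    obtain ⟨h1, h2⟩ := hi
    set a := ∏ j ∈ Finset.Icc (i + 1) m, x j with ha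
    set b := ∏ j ∈ Finset.Icc (i + 1) m, u j with hb
    set c := ∏ j ∈ Finset.Icc 1 i, x j with hc
    set d := ∏ j ∈ Finset.range i, u j with hd
    set p := ∏ j ∈ Finset.range i, (1 - u j * z) with hp
    set q := ∏ j ∈ Finset.Icc 1 i, (1 - x j * z) with hq
    set Q := ∏ s ∈ Finset.Icc 1 (i - 1), (1 - x s * z) with hQ
    have hb0 : b ≠ 0 := Finset.prod_ne_zero_iff.2 fun j hj =>
      hu0 j (by rw [Finset.mem_Icc] at hj; omega)
    have hd0 : d ≠ 0 := Finset.prod_ne_zero_iff.2 fun j hj =>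
      hu0 j (by rw [Finset.mem_range] at hj; omega)
    have hq0 : q ≠ 0 := Finset.prod_ne_zero_iff.2 fun j hj => by
      rw [Finset.mem_Icc] at hj; exact hxz j hj.1 (hj.2.trans h2)
    have hui : u i ≠ 0 := hu0 i h2
    have hvi : 1 - x i * z ≠ 0 := hxz i h1 h2
    have hqsplit : q = Q * (1 - x i * z) := by
      rw [hq, hQ]
      conv_lhs => rw [show i = (i - 1) + 1 by omega]
      rw [Finset.prod_Icc_succ_top (by omega), show i - 1 + 1 = i by omega]
    have hQ0 : Q ≠ 0 := left_ne_zero_of_mul (hqsplit ▸ hq0)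
    -- key multiplicative relation from hprod
    have hkey : x 0 * (c * a) = b * d * u i := by
      have hsplit : Finset.Icc 1 m = Finset.Icc 1 i ∪ Finset.Icc (i + 1) m := by
        ext j; simp only [Finset.mem_union, Finset.mem_Icc]; omega
      have e1 : ∏ s ∈ Finset.range (m + 1), x s = x 0 * (c * a) := by
        rw [split_zero x m, hsplit, Finset.prod_union (by
          rw [Finset.disjoint_left]; intro j hj1 hj2
          rw [Finset.mem_Icc] at hj1 hj2; omega), hc, ha]
      have e2 : ∏ s ∈ Finset.range (m + 1), u s = b * d * u i := by
        rw [hb, hd, Finset.range_eq_Ico, Finset.range_eq_Ico, ← Finset.Ico_add_one_right_eq_Icc]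
        rw [mul_assoc, mul_comm]
        rw [show (∏ j ∈ Finset.Ico 0 i, u j) * u i
            = ∏ j ∈ Finset.Ico 0 (i + 1), u j by
          rw [Finset.prod_Ico_succ_top (by omega)]]
        rw [← Finset.prod_Ico_consecutive u (by omega : 0 ≤ i + 1)
          (by omega : i + 1 ≤ m + 1)]
      rw [← e1, ← e2, hprod]
    have hAi : ∏ j ∈ Finset.Icc (i + 1) m, x j / u j = a / b :=
      Finset.prod_div_distrib _ _
    have hAim : ∏ j ∈ Finset.Icc i m, x j / u j = (x i / u i) * (a / b) := by
      rw [split_bot _ h2, hAi]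
    have hG : ∏ j ∈ Finset.Icc 1 i,
        (x j / u (j - 1)) * ((1 - u (j - 1) * z) / (1 - x j * z))
        = (c / d) * (p / q) := by
      rw [Finset.prod_mul_distrib, Finset.prod_div_distrib, Finset.prod_div_distrib,
        shift_prod u i, shift_prod (fun j => 1 - u j * z) i]
    have hEi : ∏ s ∈ Finset.range (i + 1), (1 - u s * z) = p * (1 - u i * z) := by
      rw [Finset.prod_range_succ]
    have hAG : (a / b) * ((c / d) * (p / q)) = u i * p / (x 0 * q) := by
      rw [div_mul_div_comm, div_mul_div_comm, div_eq_div_iff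
        (mul_ne_zero hb0 (mul_ne_zero hd0 hq0)) (mul_ne_zero hx00 hq0)]
      linear_combination (q * p) * hkey
    have hPQ : p / Q = p * (1 - x i * z) / q := by
      rw [hqsplit, mul_div_mul_right _ _ hvi]
    simp only [hF]
    rw [show i - 1 + 1 = i by omega]
    rw [hAi, hAim, hEi, ← hp, ← hq, ← hQ, hG]
    rw [mul_one_sub (a / b * (1 - x i / u i)),
      show a / b * (1 - x i / u i) * (c / d * (p / q))
        = (1 - x i / u i) * ((a / b) * ((c / d) * (p / q))) by ring,
      hAG, hPQ]
    exact per_term_alg a b p q (u i) (x i) (x 0) z hb0 hq0 hui hx00 hz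
  rw [Finset.sum_congr rfl key]
  have tele : ∑ i ∈ Finset.Icc 1 m, (F i - F (i - 1)) = F m - F 0 := by
    rw [← Finset.Ico_add_one_right_eq_Icc, Finset.sum_Ico_eq_sum_range]
    calc ∑ k ∈ Finset.range (m + 1 - 1), (F (1 + k) - F (1 + k - 1))
        = ∑ k ∈ Finset.range m, (F (k + 1) - F k) := by
          apply Finset.sum_congr (by norm_num)
          intro k _
          congr 1 <;> congr 1 <;> omega
      _ = F m - F 0 := Finset.sum_range_sub F m
  rw [tele]
  simp only [hF, Finset.Icc_eq_empty_of_lt (by omega : m < m + 1), Finset.prod_empty,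
    Finset.Icc_eq_empty_of_lt (by omega : (0:ℕ) < 1), Finset.prod_range_one]
  have hQ0 : (∏ s ∈ Finset.Icc 1 m, (1 - x s * z)) ≠ 0 :=
    Finset.prod_ne_zero_iff.2 fun j hj => by
      rw [Finset.mem_Icc] at hj; exact hxz j hj.1 hj.2
  have hu00 : u 0 ≠ 0 := hu0 0 (by omega)
  have hPu0 : (∏ j ∈ Finset.Icc 1 m, u j) ≠ 0 :=
    Finset.prod_ne_zero_iff.2 fun j hj => hu0 j (by rw [Finset.mem_Icc] at hj; omega)
  have hR : ∏ j ∈ Finset.Icc 1 m, x j / u j = u 0 / x 0 := by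
    rw [Finset.prod_div_distrib]
    have h := hprod
    rw [split_zero x m, split_zero u m] at h
    rw [div_eq_div_iff hPu0 hx00]
    linear_combination h
  rw [hR]
  field_simp
  simp only [zero_add, Finset.prod_range_one]
  ring
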